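/- Let I be an operation instance, let k ≥ 1, and let t_1 ≤ t_2 ≤ ⋯ ≤ t_k be real times with e(I) < t_1 such that for every j with 1 ≤ j ≤ k−1 and every process p there exists a time u with t_j ≤ u ≤ t_{j+1} at which p is quiescent. Then every instance Z that is reachable from I in the contention graph with graph distance at most k−1 satisfies e(Z) < t_k (i.e., every instance at most distance k−1 from I in the contention graph ends before the k-th time t_k). -/

import Mathlib

/-- The contention graph on operation instances with start times `s` and end
times `e`: two distinct instances are adjacent iff they overlap (neither ends
before the other starts). -/
def contentionGraph {ι : Type*} (s e : ι → ℝ) : SimpleGraph ι where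
  Adj a b := a ≠ b ∧ s b ≤ e a ∧ s a ≤ e b
  symm := by
    constructor
    intro a b h
    exact ⟨h.1.symm, h.2.2, h.2.1⟩
  loopless := by
    constructor
    intro a h
    exact h.1 rfl

lemma walk_aux {ι Pr : Type*} (s e : ι → ℝ) (π : ι → Pr)
    (k : ℕ) (t : ℕ → ℝ)
    (hq : ∀ j, 1 ≤ j → j ≤ k - 1 → ∀ p : Pr,
      ∃ u, t j ≤ u ∧ u ≤ t (j + 1) ∧ ∀ i, π i = p → ¬ (s i ≤ u ∧ u ≤ e i)) :
    ∀ {a b : ι} (w : (contentionGraph s e).Walk a b) (j : ℕ), 1 ≤ j →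
      j + w.length ≤ k → e a < t j → e b < t (j + w.length) := by
  intro a b w
  induction w with
  | nil => intro j hj hjk ha; simpa using ha
  | @cons a c b h p ih =>
    intro j hj hjk ha
    rw [SimpleGraph.Walk.length_cons] at hjk
    have hsc : s c ≤ e a := h.2.1
    have hjk1 : j ≤ k - 1 := by omega
    obtain ⟨u, hu1, hu2, hu3⟩ := hq j hj hjk1 (π c)
    have hscu : s c ≤ u := le_trans hsc (le_trans ha.le hu1)
    have hec : e c < u := by
      by_contra hcon
      exact hu3 c rfl ⟨hscu, le_of_not_gt hcon⟩
    have hc : e c < t (j + 1) := lt_of_lt_of_le hec hu2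
    have := ih (j + 1) (by omega) (by omega) hc
    have hlen : j + (SimpleGraph.Walk.cons h p).length = (j + 1) + p.length := by
      simp [SimpleGraph.Walk.length_cons]; omega
    rw [hlen]
    exact this

/-- If `e I < t 1 ≤ t 2 ≤ ⋯ ≤ t k` and, for each `1 ≤ j ≤ k-1`, every process
is quiescent at some time in `[t j, t (j+1)]`, then every instance `Z` within
graph distance `k-1` of `I` in the contention graph ends before `t k`. -/
theorem every_instance_within_distance_ends_before
    {ι Pr : Type*} (s e : ι → ℝ) (π : ι → Pr)
    (hse : ∀ i, s i ≤ e i)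
    (I : ι) (k : ℕ) (hk : 1 ≤ k) (t : ℕ → ℝ)
    (hmono : ∀ j, 1 ≤ j → j < k → t j ≤ t (j + 1))
    (h1 : e I < t 1)
    (hq : ∀ j, 1 ≤ j → j ≤ k - 1 → ∀ p : Pr,
      ∃ u, t j ≤ u ∧ u ≤ t (j + 1) ∧ ∀ i, π i = p → ¬ (s i ≤ u ∧ u ≤ e i))
    (Z : ι) (w : (contentionGraph s e).Walk I Z) (hw : w.length ≤ k - 1) :
    e Z < t k := by
  have hZ : e Z < t (1 + w.length) :=
    walk_aux s e π k t hq w 1 le_rfl (by omega) h1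
  have hmono' : ∀ d m, 1 ≤ m → m + d ≤ k → t m ≤ t (m + d) := by
    intro d
    induction d with
    | zero => intro m _ _; simp
    | succ n ih =>
      intro m hm hmk
      have h1 := ih m hm (by omega)
      have h2 := hmono (m + n) (by omega) (by omega)
      calc t m ≤ t (m + n) := h1
        _ ≤ t (m + n + 1) := h2
        _ = t (m + (n + 1)) := by ring_nf
  have : t (1 + w.length) ≤ t k := by
    have := hmono' (k - (1 + w.length)) (1 + w.length) (by omega) (by omega)
    have heq : 1 + w.length + (k - (1 + w.length)) = k := by omega
    rwa [heq] at this
  linarith
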